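/- Let W_Γ be a Coxeter group. If there exist two non-adjacent even vertices v, w ∈ V, then the automorphism group Aut(W_Γ) virtually surjects onto the free product ℤ/2 * ℤ/2 (the infinite dihedral group). -/

import Mathlib

open Function Subgroup

namespace CoxeterMatrix

variable {V : Type*}

/-- Two vertices of a Coxeter graph are adjacent iff they are distinct and their Coxeter
matrix entry is nonzero (an entry `0` encodes `∞`, i.e. non-adjacency; entries `≥ 2`
are the edge labels). -/
def Adj (M : CoxeterMatrix V) (v w : V) : Prop := v ≠ w ∧ M v w ≠ 0

/-- A clique of the Coxeter graph: a set of pairwise adjacent vertices. -/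
def IsClique (M : CoxeterMatrix V) (S : Set V) : Prop := S.Pairwise M.Adj

/-- A maximal clique: a clique not properly contained in any other clique. -/
def IsMaxClique (M : CoxeterMatrix V) (S : Set V) : Prop :=
  M.IsClique S ∧ ∀ T, M.IsClique T → S ⊆ T → S = T

/-- The special subgroup `W_S` of the Coxeter group generated by the
simple reflections indexed by `S`. -/
def sp (M : CoxeterMatrix V) (S : Set V) : Subgroup M.Group :=
  Subgroup.closure (M.simple '' S)

/-- A vertex is even if every edge containing it has even label. -/
def EvenVertex (M : CoxeterMatrix V) (v : V) : Prop :=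
  ∀ w, M.Adj v w → Even (M v w)

end CoxeterMatrix

/-- `G` virtually surjects onto `Q` iff some finite-index subgroup of `G`
admits a surjective group homomorphism onto `Q`. -/
def VirtuallySurjectsOnto (G Q : Type*) [Group G] [Group Q] : Prop :=
  ∃ H : Subgroup G, H.FiniteIndex ∧ ∃ φ : H →* Q, Function.Surjective φ

/-- The free product `ℤ/2 * ℤ/2` (the infinite dihedral group). -/
abbrev Z2Z2 := Monoid.Coprod (Multiplicative (ZMod 2)) (Multiplicative (ZMod 2))


namespace Stmt1Aux

open DihedralGroup Multiplicative

abbrev C2 := Multiplicative (ZMod 2)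

def g2 : C2 := Multiplicative.ofAdd (1 : ZMod 2)

abbrev DD := DihedralGroup 0

/-! ### ℤ-typed lemmas about `DihedralGroup 0` (using `ZMod 0 = ℤ` definitionally) -/

lemma rr (i j : ℤ) : (r i * r j : DD) = r (i + j) := rfl
lemma rsr (i j : ℤ) : (r i * sr j : DD) = sr (j - i) := rfl
lemma srr (i j : ℤ) : (sr i * r j : DD) = sr (i + j) := rfl
lemma srsr (i j : ℤ) : (sr i * sr j : DD) = r (j - i) := rfl
lemma one_eq_r : (1 : DD) = r 0 := rfl
lemma r_inv (i : ℤ) : (r i : DD)⁻¹ = r (-i) := rfl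
lemma sr_inv (i : ℤ) : (sr i : DD)⁻¹ = sr i := rfl

lemma r_injz {i j : ℤ} (h : (r i : DD) = r j) : i = j := by
  injection h

lemma r_ne_sr {i j : ℤ} : (r i : DD) ≠ sr j := fun h => by injection h

/-- r 1 generates all rotations. -/
lemma r_one_zpow (i : ℤ) : (r 1 : DD) ^ i = r i := by
  induction i using Int.induction_on with
  | zero => rfl
  | succ k ih =>
      rw [zpow_add_one, ih]; rfl
  | pred k ih =>
      rw [zpow_sub_one, ih]; rfl


/-- Identity on `ZMod 0 = ℤ`, used to move between the two types. -/
def zi (i : ZMod 0) : ℤ := i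

lemma casesZ (x : DD) : (∃ i : ℤ, x = r i) ∨ (∃ j : ℤ, x = sr j) := by
  rcases x with i | j
  · exact Or.inl ⟨zi i, rfl⟩
  · exact Or.inr ⟨zi j, rfl⟩

/-! ### Parity homomorphisms on `DD` -/

private def parf : DD → ZMod 2
  | r i => ((zi i : ZMod 2))
  | sr j => ((zi j : ZMod 2))

private def sgnf : DD → ZMod 2
  | r _ => 0
  | sr _ => 1

private def parm : DD → C2 := fun x => Multiplicative.ofAdd (parf x)
private def sgnm : DD → C2 := fun x => Multiplicative.ofAdd (sgnf x)

lemma parm_r (i : ℤ) : parm (r i : DD) = Multiplicative.ofAdd ((i : ZMod 2)) := rfl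
lemma parm_sr (j : ℤ) : parm (sr j : DD) = Multiplicative.ofAdd ((j : ZMod 2)) := rfl
lemma sgnm_r (i : ℤ) : sgnm (r i : DD) = Multiplicative.ofAdd (0 : ZMod 2) := rfl
lemma sgnm_sr (j : ℤ) : sgnm (sr j : DD) = g2 := rfl

lemma zmod2_sub : ∀ a b : ZMod 2, a - b = a + b := by decide

def par : DD →* C2 :=
  MonoidHom.mk' parm (by
    intro a b
    rcases casesZ a with ⟨i, rfl⟩ | ⟨i, rfl⟩ <;> rcases casesZ b with ⟨j, rfl⟩ | ⟨j, rfl⟩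
    · rw [rr, parm_r, parm_r, parm_r, ← ofAdd_add]
      exact congrArg _ (by push_cast; ring)
    · rw [rsr, parm_sr, parm_r, parm_sr, ← ofAdd_add]
      exact congrArg _ (by push_cast; rw [zmod2_sub]; ring)
    · rw [srr, parm_sr, parm_sr, parm_r, ← ofAdd_add]
      exact congrArg _ (by push_cast; ring)
    · rw [srsr, parm_r, parm_sr, parm_sr, ← ofAdd_add]
      exact congrArg _ (by push_cast; rw [zmod2_sub]; ring))

def sgn : DD →* C2 :=
  MonoidHom.mk' sgnm (by
    intro a b
    rcases casesZ a with ⟨i, rfl⟩ | ⟨i, rfl⟩ <;> rcases casesZ b with ⟨j, rfl⟩ | ⟨j, rfl⟩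
    · rw [rr, sgnm_r, sgnm_r, sgnm_r, ← ofAdd_add]
      exact congrArg _ (by decide)
    · rw [rsr, sgnm_sr, sgnm_r, sgnm_sr, g2, ← ofAdd_add]
      exact congrArg _ (by decide)
    · rw [srr, sgnm_sr, sgnm_sr, sgnm_r, g2, ← ofAdd_add]
      exact congrArg _ (by decide)
    · rw [srsr, sgnm_r, sgnm_sr, sgnm_sr, g2, ← ofAdd_add]
      exact congrArg _ (by decide))

@[simp] lemma par_r (i : ℤ) : par (r i : DD) = Multiplicative.ofAdd ((i : ZMod 2)) := rfl
@[simp] lemma par_sr (j : ℤ) : par (sr j : DD) = Multiplicative.ofAdd ((j : ZMod 2)) := rfl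
@[simp] lemma sgn_r (i : ℤ) : sgn (r i : DD) = 1 := rfl
@[simp] lemma sgn_sr (j : ℤ) : sgn (sr j : DD) = g2 := rfl

/-- The two "coordinate" characters of the infinite dihedral group. -/
def eps1 : DD →* C2 := par * sgn
def eps2 : DD →* C2 := par

lemma eps1_apply (x : DD) : eps1 x = par x * sgn x := rfl

/-! ### Classification of elements by their character values -/

lemma ofAdd_injective : Function.Injective (Multiplicative.ofAdd (α := ZMod 2)) :=
  Multiplicative.ofAdd.injective

lemma cast_eq_zero_iff (j : ℤ) : ((j : ZMod 2) = 0) ↔ (2 : ℤ) ∣ j :=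
  ZMod.intCast_zmod_eq_zero_iff_dvd j 2

lemma eps1_r (i : ℤ) : eps1 (r i : DD) = Multiplicative.ofAdd ((i : ZMod 2)) := by
  rw [eps1_apply, par_r, sgn_r, mul_one]

lemma eps1_sr (j : ℤ) : eps1 (sr j : DD) = Multiplicative.ofAdd ((j : ZMod 2) + 1) := by
  rw [eps1_apply, par_sr, sgn_sr, g2, ← ofAdd_add]

lemma classify_one {x : DD} (hsq : x * x = 1) (h2 : eps2 x = 1) (h1 : eps1 x = 1) :
    x = 1 := by
  rcases casesZ x with ⟨i, rfl⟩ | ⟨j, rfl⟩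
  · rw [rr, one_eq_r] at hsq
    have h := r_injz hsq
    rw [one_eq_r]
    exact congrArg r (show i = 0 by omega)
  · exfalso
    have hp : ((j : ZMod 2)) = 0 := by
      rw [eps2, par_sr, ofAdd_eq_one] at h2; exact h2
    have hq : ((j : ZMod 2)) + 1 = 0 := by
      rw [eps1_sr, ofAdd_eq_one] at h1; exact h1
    rw [hp] at hq
    exact absurd hq (by decide)

lemma classify_x {x : DD} (h2 : eps2 x = 1) (h1 : eps1 x = g2) :
    ∃ a : ℤ, x = sr (2 * a) := by
  rcases casesZ x with ⟨i, rfl⟩ | ⟨j, rfl⟩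
  · exfalso
    have hp : ((i : ZMod 2)) = 0 := by
      rw [eps2, par_r, ofAdd_eq_one] at h2; exact h2
    have hq : ((i : ZMod 2)) = 1 := by
      rw [eps1_r, g2] at h1; exact ofAdd_injective h1
    rw [hp] at hq
    exact absurd hq (by decide)
  · have hp : ((j : ZMod 2)) = 0 := by
      rw [eps2, par_sr, ofAdd_eq_one] at h2; exact h2
    obtain ⟨a, ha⟩ := (cast_eq_zero_iff j).mp hp
    exact ⟨a, congrArg sr (show j = 2 * a by omega)⟩

lemma classify_y {x : DD} (h2 : eps2 x = g2) (h1 : eps1 x = 1) :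
    ∃ b : ℤ, x = sr (2 * b + 1) := by
  rcases casesZ x with ⟨i, rfl⟩ | ⟨j, rfl⟩
  · exfalso
    have hp : ((i : ZMod 2)) = 1 := by
      rw [eps2, par_r, g2] at h2; exact ofAdd_injective h2
    have hq : ((i : ZMod 2)) = 0 := by
      rw [eps1_r, ofAdd_eq_one] at h1; exact h1
    rw [hp] at hq
    exact absurd hq (by decide)
  · have hp : ((j : ZMod 2)) = 1 := by
      rw [eps2, par_sr, g2] at h2; exact ofAdd_injective h2
    have hz : (((j - 1 : ℤ)) : ZMod 2) = 0 := by push_cast; rw [hp]; ring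
    obtain ⟨b, hb⟩ := (cast_eq_zero_iff _).mp hz
    exact ⟨b, congrArg sr (show j = 2 * b + 1 by omega)⟩


/-! ### The subgroup generated by two reflections -/

open Subgroup in
private def Spq (p d : ℤ) : Subgroup DD where
  carrier := {x | (∃ k : ℤ, x = r (k * d)) ∨ (∃ k : ℤ, x = sr (p + k * d))}
  one_mem' := Or.inl ⟨0, by rw [one_eq_r]; exact congrArg r (by ring_nf; rfl)⟩
  mul_mem' := by
    rintro x y (⟨k, rfl⟩ | ⟨k, rfl⟩) (⟨k', rfl⟩ | ⟨k', rfl⟩)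
    · exact Or.inl ⟨k + k', by rw [rr]; exact congrArg r (by ring_nf; rfl)⟩
    · exact Or.inr ⟨k' - k, by rw [rsr]; exact congrArg sr (by ring_nf; rfl)⟩
    · exact Or.inr ⟨k + k', by rw [srr]; exact congrArg sr (by ring_nf; rfl)⟩
    · exact Or.inl ⟨k' - k, by rw [srsr]; exact congrArg r (by ring_nf; rfl)⟩
  inv_mem' := by
    rintro x (⟨k, rfl⟩ | ⟨k, rfl⟩)
    · exact Or.inl ⟨-k, by rw [r_inv]; exact congrArg r (by ring_nf; rfl)⟩
    · exact Or.inr ⟨k, by rw [sr_inv]⟩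

lemma gen_pq {p q : ℤ} (h : (r 1 : DD) ∈ Subgroup.closure {(sr p : DD), sr q}) :
    q - p = 1 ∨ q - p = -1 := by
  have hle : Subgroup.closure {(sr p : DD), sr q} ≤ Spq p (q - p) := by
    rw [Subgroup.closure_le]
    rintro x (rfl | rfl)
    · exact Or.inr ⟨0, congrArg sr (by ring_nf; rfl)⟩
    · exact Or.inr ⟨1, congrArg sr (by ring_nf; rfl)⟩
  rcases hle h with ⟨k, hk⟩ | ⟨k, hk⟩
  · have h1 : 1 = k * (q - p) := r_injz hk
    rcases Int.mul_eq_one_iff_eq_one_or_neg_one.mp h1.symm with ⟨_, h2⟩ | ⟨_, h2⟩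
    · exact Or.inl h2
    · exact Or.inr h2
  · exact absurd hk r_ne_sr

/-! ### Trivial centre, conjugation formulas -/

lemma conj_r_sr (a j : ℤ) : (r a : DD) * sr j * (r a)⁻¹ = sr ((j - 2 * a : ℤ)) := by
  rw [r_inv, rsr, srr]
  exact congrArg sr (by ring_nf; rfl)

lemma conj_sr_sr (k j : ℤ) : (sr k : DD) * sr j * (sr k)⁻¹ = sr ((2 * k - j : ℤ)) := by
  rw [sr_inv, srsr, rsr]
  exact congrArg sr (by ring_nf; rfl)

lemma eq_of_conj_eq {d d' : DD} (h : ∀ z : DD, d * z * d⁻¹ = d' * z * d'⁻¹) : d = d' := by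
  have hc : ∀ z : DD, (d'⁻¹ * d) * z = z * (d'⁻¹ * d) := by
    intro z
    have h2 : d'⁻¹ * (d * z * d⁻¹) * d = d'⁻¹ * (d' * z * d'⁻¹) * d := by rw [h z]
    calc d'⁻¹ * d * z = d'⁻¹ * (d * z * d⁻¹) * d := by group
    _ = d'⁻¹ * (d' * z * d'⁻¹) * d := h2
    _ = z * (d'⁻¹ * d) := by group
  have he : d'⁻¹ * d = 1 := by
    rcases casesZ (d'⁻¹ * d) with ⟨i, hi⟩ | ⟨j, hj⟩
    · have := hc (sr 0)
      rw [hi] at this; change (sr ((0:ℤ) - i) : DD) = sr ((0:ℤ) + i) at this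
      have h3 : (0 : ℤ) - i = 0 + i := by injection this
      rw [hi, one_eq_r]
      exact congrArg r (show i = 0 by omega)
    · exfalso
      have := hc (r 1)
      rw [hj] at this; change (sr (j + (1:ℤ)) : DD) = sr (j - (1:ℤ)) at this
      have h3 : j + 1 = j - 1 := by injection this
      omega
  calc d = d' * (d'⁻¹ * d) := by group
  _ = d' := by rw [he, mul_one]

/-! ### `DD` is generated by `sr 0` and `sr 1` -/

lemma closure_sr_eq_top : Subgroup.closure {(sr 0 : DD), sr 1} = ⊤ := by
  rw [eq_top_iff]
  intro x _
  have h0 : (sr 0 : DD) ∈ Subgroup.closure {(sr 0 : DD), sr 1} :=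
    Subgroup.subset_closure (by simp)
  have h1 : (sr 1 : DD) ∈ Subgroup.closure {(sr 0 : DD), sr 1} :=
    Subgroup.subset_closure (by simp)
  have hr1 : (r 1 : DD) ∈ Subgroup.closure {(sr 0 : DD), sr 1} := by
    have : (r 1 : DD) = sr 0 * sr 1 := by rfl
    rw [this]; exact mul_mem h0 h1
  have hrz : ∀ i : ℤ, (r i : DD) ∈ Subgroup.closure {(sr 0 : DD), sr 1} := by
    intro i
    rw [← r_one_zpow i]
    exact zpow_mem hr1 i
  rcases casesZ x with ⟨i, rfl⟩ | ⟨j, rfl⟩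
  · exact hrz i
  · have : (sr j : DD) = sr 0 * r j := by change (sr j : DD) = sr ((0:ℤ) + j); exact congrArg sr (zero_add j).symm
    rw [this]
    exact mul_mem h0 (hrz j)


/-! ### The homomorphism from `DD` onto `C2 ∗ C2` -/

abbrev Z2Z2' := Monoid.Coprod C2 C2

def inlg : Z2Z2' := Monoid.Coprod.inl g2
def inrg : Z2Z2' := Monoid.Coprod.inr g2

lemma g2_mul_g2 : g2 * g2 = 1 := by decide

lemma inlg_sq : inlg * inlg = 1 := by
  rw [inlg, ← map_mul, g2_mul_g2, map_one]

lemma inlg_inv : inlg⁻¹ = inlg := inv_eq_of_mul_eq_one_right inlg_sq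

lemma inrg_sq : inrg * inrg = 1 := by
  rw [inrg, ← map_mul, g2_mul_g2, map_one]

lemma inrg_inv : inrg⁻¹ = inrg := inv_eq_of_mul_eq_one_right inrg_sq

def Zel : Z2Z2' := inlg * inrg

lemma conj_inlg_Zel : inlg * Zel * inlg⁻¹ = Zel⁻¹ := by
  rw [inlg_inv, Zel, mul_inv_rev, inrg_inv, inlg_inv]
  rw [show inlg * (inlg * inrg) * inlg = inlg * inlg * (inrg * inlg) by group]
  rw [inlg_sq, one_mul]

lemma conj_inlg_Zpow (i : ℤ) : inlg * Zel ^ i * inlg = Zel ^ (-i) := by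
  have h : (MulAut.conj inlg) (Zel ^ i) = Zel ^ (-i) := by
    rw [map_zpow]
    rw [show (MulAut.conj inlg) Zel = inlg * Zel * inlg⁻¹ from rfl, conj_inlg_Zel]
    rw [inv_zpow, zpow_neg]
  calc inlg * Zel ^ i * inlg = inlg * Zel ^ i * inlg⁻¹ := by rw [inlg_inv]
  _ = (MulAut.conj inlg) (Zel ^ i) := rfl
  _ = Zel ^ (-i) := h

private def sigf : DD → Z2Z2'
  | r i => Zel ^ (zi i)
  | sr j => inlg * Zel ^ (zi j)

lemma sigf_r (i : ℤ) : sigf (r i : DD) = Zel ^ i := rfl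
lemma sigf_sr (j : ℤ) : sigf (sr j : DD) = inlg * Zel ^ j := rfl

def sig : DD →* Z2Z2' :=
  MonoidHom.mk' sigf (by
    intro a b
    rcases casesZ a with ⟨i, rfl⟩ | ⟨i, rfl⟩ <;> rcases casesZ b with ⟨j, rfl⟩ | ⟨j, rfl⟩
    · rw [rr, sigf_r, sigf_r, sigf_r, zpow_add]
    · rw [rsr, sigf_sr, sigf_r, sigf_sr]
      have : Zel ^ i * (inlg * Zel ^ j) = (inlg * (inlg * Zel ^ i * inlg)) * Zel ^ j := by
        rw [show inlg * (inlg * Zel ^ i * inlg) = (inlg * inlg) * Zel ^ i * inlg by group,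
          inlg_sq, one_mul]
        group
      rw [this, conj_inlg_Zpow, mul_assoc, ← zpow_add]
      exact congrArg _ (congrArg _ (by ring))
    · rw [srr, sigf_sr, sigf_sr, sigf_r, mul_assoc, ← zpow_add]
    · rw [srsr, sigf_r, sigf_sr, sigf_sr]
      have : inlg * Zel ^ i * (inlg * Zel ^ j) = (inlg * Zel ^ i * inlg) * Zel ^ j := by group
      rw [this, conj_inlg_Zpow, ← zpow_add]
      exact congrArg _ (by ring))

lemma sig_sr_zero : sig (sr 0 : DD) = inlg := by
  rw [show sig (sr 0 : DD) = sigf (sr (0:ℤ)) from rfl, sigf_sr, zpow_zero, mul_one]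

lemma sig_sr_one : sig (sr 1 : DD) = inrg := by
  rw [show sig (sr 1 : DD) = sigf (sr (1:ℤ)) from rfl, sigf_sr, zpow_one, Zel,
    show inlg * (inlg * inrg) = (inlg * inlg) * inrg by group, inlg_sq, one_mul]

lemma sig_surjective : Function.Surjective sig := by
  have hm : ∀ m : C2, m = 1 ∨ m = g2 := by decide
  intro c
  induction c using Monoid.Coprod.induction_on with
  | inl m =>
      rcases hm m with rfl | rfl
      · exact ⟨1, by rw [map_one, map_one]⟩
      · exact ⟨sr 0, sig_sr_zero⟩
  | inr m =>
      rcases hm m with rfl | rfl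
      · exact ⟨1, by rw [map_one, map_one]⟩
      · exact ⟨sr 1, sig_sr_one⟩
  | mul x y hx hy =>
      obtain ⟨a, ha⟩ := hx
      obtain ⟨b, hb⟩ := hy
      exact ⟨a * b, by rw [map_mul, ha, hb]⟩


/-! ### The Coxeter side -/

section CoxPart

open CoxeterMatrix

variable {V : Type*} [DecidableEq V]

/-- The candidate images of the simple generators. -/
def fgen (v w : V) : V → DD := fun u => if u = v then sr 0 else if u = w then sr 1 else 1

lemma sr_self (j : ℤ) : (sr j : DD) * sr j = 1 := by
  rw [srsr, one_eq_r]; exact congrArg r (by ring_nf; rfl)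

lemma fgen_sq (v w u : V) : fgen v w u * fgen v w u = 1 := by
  unfold fgen
  split_ifs
  · exact sr_self 0
  · exact sr_self 1
  · rw [one_mul]

lemma fgen_v (v w : V) : fgen v w v = sr 0 := if_pos rfl

lemma fgen_w {v w : V} (hvw : v ≠ w) : fgen v w w = sr 1 := by
  unfold fgen
  rw [if_neg (Ne.symm hvw), if_pos rfl]

lemma fgen_other {v w u : V} (h1 : u ≠ v) (h2 : u ≠ w) : fgen v w u = 1 := by
  unfold fgen
  rw [if_neg h1, if_neg h2]

lemma pow_even_of_sq {x : DD} (hx : x * x = 1) {m : ℕ} (hm : Even m) : x ^ m = 1 := by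
  obtain ⟨k, rfl⟩ := hm
  rw [← two_mul, pow_mul, pow_two, hx, one_pow]

variable (M : CoxeterMatrix V) (v w : V)

lemma liftable (hvw : v ≠ w) (hnadj : M v w = 0)
    (hv : M.EvenVertex v) (hw : M.EvenVertex w) :
    M.IsLiftable (fgen v w) := by
  intro i i'
  by_cases hii : i = i'
  · subst hii
    rw [M.diagonal i, pow_one, fgen_sq]
  by_cases hA : i = v ∧ i' = w
  · obtain ⟨rfl, rfl⟩ := hA
    rw [show M.M i i' = 0 from hnadj, pow_zero]
  by_cases hB : i = w ∧ i' = v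
  · obtain ⟨rfl, rfl⟩ := hB
    rw [show M.M i i' = 0 from (M.symmetric i i').trans hnadj, pow_zero]
  -- now at most one of i, i' lies in {v, w}
  have hone : fgen v w i = 1 ∨ fgen v w i' = 1 := by
    by_cases hiv : i = v
    · subst hiv
      refine Or.inr (fgen_other (fun h => hii h.symm) ?_)
      intro h
      exact hA ⟨rfl, h⟩
    by_cases hiw : i = w
    · subst hiw
      refine Or.inr (fgen_other ?_ (fun h => hii h.symm))
      intro h
      exact hB ⟨rfl, h⟩
    · exact Or.inl (fgen_other hiv hiw)
  have hsq : (fgen v w i * fgen v w i') * (fgen v w i * fgen v w i') = 1 := by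
    rcases hone with h | h
    · rw [h, one_mul, fgen_sq]
    · rw [h, mul_one, fgen_sq]
  by_cases hM : M.M i i' = 0
  · rw [hM, pow_zero]
  have heven : Even (M.M i i') ∨ (fgen v w i * fgen v w i' = 1) := by
    by_cases hiv : i = v
    · subst hiv; exact Or.inl (hv i' ⟨fun h => hii h, hM⟩)
    by_cases hiw : i = w
    · subst hiw; exact Or.inl (hw i' ⟨fun h => hii h, hM⟩)
    by_cases hi'v : i' = v
    · subst hi'v
      refine Or.inl ?_
      have : Even (M.M i' i) := hv i ⟨fun h => hii h.symm, fun h => hM ((M.symmetric i i').trans h)⟩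
      rwa [M.symmetric i i']
    by_cases hi'w : i' = w
    · subst hi'w
      refine Or.inl ?_
      have : Even (M.M i' i) := hw i ⟨fun h => hii h.symm, fun h => hM ((M.symmetric i i').trans h)⟩
      rwa [M.symmetric i i']
    · exact Or.inr (by rw [fgen_other hiv hiw, one_mul, fgen_other hi'v hi'w])
  rcases heven with he | h1
  · exact pow_even_of_sq hsq he
  · rw [h1, one_pow]

/-- The retraction `W → D∞` killing all simple generators except `v` and `w`. -/
noncomputable def piH (hvw : v ≠ w) (hnadj : M v w = 0)
    (hv : M.EvenVertex v) (hw : M.EvenVertex w) : M.Group →* DD :=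
  M.toCoxeterSystem.lift ⟨fgen v w, liftable M v w hvw hnadj hv hw⟩

variable (hvw : v ≠ w) (hnadj : M v w = 0) (hv : M.EvenVertex v) (hw : M.EvenVertex w)

lemma piH_simple (u : V) :
    piH M v w hvw hnadj hv hw (M.simple u) = fgen v w u :=
  M.toCoxeterSystem.lift_apply_simple (liftable M v w hvw hnadj hv hw) u

lemma piH_surjective : Function.Surjective (piH M v w hvw hnadj hv hw) := by
  rw [← MonoidHom.range_eq_top, eq_top_iff, ← closure_sr_eq_top, Subgroup.closure_le]
  rintro x (rfl | rfl)
  · exact ⟨M.simple v, by rw [piH_simple, fgen_v]⟩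
  · exact ⟨M.simple w, by rw [piH_simple, fgen_w hvw]⟩


/-! ### The action of `MulAut` on characters, and the finite-index subgroup -/

lemma finite_chars [Fintype V] : Finite (M.Group →* C2) := by
  have : Finite (V → C2) := inferInstance
  exact Finite.of_injective (fun χ => (fun u => χ (M.simple u)))
    (fun χ₁ χ₂ h => M.toCoxeterSystem.ext_simple (fun i => congrFun h i))

/-- The action of `MulAut W` on characters `W →* C2` by precomposition with the inverse. -/
def Psi : MulAut M.Group →* Equiv.Perm (M.Group →* C2) where
  toFun α :=
    { toFun := fun χ => χ.comp α.symm.toMonoidHom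
      invFun := fun χ => χ.comp α.toMonoidHom
      left_inv := fun χ => by ext x; simp
      right_inv := fun χ => by ext x; simp }
  map_one' := by
    ext χ x
    rfl
  map_mul' := fun a b => by
    ext χ x
    rfl

lemma ker_fix {α : MulAut M.Group} (hα : α ∈ (Psi M).ker) (χ : M.Group →* C2) :
    χ.comp α.toMonoidHom = χ := by
  have h := MonoidHom.mem_ker.mp (inv_mem hα)
  have h2 : (Psi M α⁻¹) χ = χ := by rw [h]; rfl
  have e : (α⁻¹ : MulAut M.Group).symm = α := by
    rw [MulAut.inv_def, MulEquiv.symm_symm]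
  calc χ.comp α.toMonoidHom = χ.comp ((α⁻¹ : MulAut M.Group).symm).toMonoidHom := by rw [e]
  _ = χ := h2

lemma conj_mem_ker (x0 : M.Group) : MulAut.conj x0 ∈ (Psi M).ker := by
  rw [MonoidHom.mem_ker]
  refine Equiv.ext (fun χ => ?_)
  refine MonoidHom.ext (fun y => ?_)
  show χ ((MulAut.conj x0).symm y) = χ y
  rw [MulAut.conj_symm_apply, map_mul, map_mul, map_inv, mul_assoc,
    mul_comm (χ y) (χ x0), ← mul_assoc, inv_mul_cancel, one_mul]

lemma ker_finiteIndex [Fintype V] : (Psi M).ker.FiniteIndex := by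
  haveI : Finite (M.Group →* C2) := finite_chars M
  haveI : Finite (Equiv.Perm (M.Group →* C2)) := inferInstance
  refine ⟨?_⟩
  rw [Subgroup.index_ker]
  exact Nat.card_ne_zero.mpr ⟨⟨1⟩, inferInstance⟩


/-! ### Values of the characters at the two basic reflections -/

lemma eps2_sr_zero : eps2 (sr 0 : DD) = 1 := by
  change eps2 (sr (0:ℤ) : DD) = 1
  rw [eps2, par_sr]
  norm_num

lemma eps1_sr_zero : eps1 (sr 0 : DD) = g2 := by
  change eps1 (sr (0:ℤ) : DD) = g2
  rw [eps1_sr, g2]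
  norm_num

lemma eps2_sr_one : eps2 (sr 1 : DD) = g2 := by
  change eps2 (sr (1:ℤ) : DD) = g2
  rw [eps2, par_sr, g2]
  norm_num

lemma eps1_sr_one : eps1 (sr 1 : DD) = 1 := by
  change eps1 (sr (1:ℤ) : DD) = 1
  rw [eps1_sr, ofAdd_eq_one]
  decide

/-! ### The key rigidity lemma -/

lemma exists_conj (α : MulAut M.Group)
    (hfix : ∀ χ : M.Group →* C2, χ.comp α.toMonoidHom = χ) :
    ∃ d : DD, ∀ x : M.Group,
      piH M v w hvw hnadj hv hw (α x) = d * piH M v w hvw hnadj hv hw x * d⁻¹ := by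
  set π := piH M v w hvw hnadj hv hw with hπdef
  set q := π.comp α.toMonoidHom with hqdef
  have heps : ∀ (ε : DD →* C2) (x : M.Group), ε (q x) = ε (π x) := by
    intro ε x
    exact DFunLike.congr_fun (hfix (ε.comp π)) x
  have hsimple_sq : ∀ u, q (M.simple u) * q (M.simple u) = 1 := by
    intro u
    rw [← map_mul,
      show M.simple u * M.simple u = 1 from M.toCoxeterSystem.simple_mul_simple_self u,
      map_one]
  have hval : ∀ u, π (M.simple u) = fgen v w u := piH_simple M v w hvw hnadj hv hw
  have hother : ∀ u, u ≠ v → u ≠ w → q (M.simple u) = 1 := by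
    intro u h1 h2
    refine classify_one (hsimple_sq u) ?_ ?_
    · rw [heps eps2, hval, fgen_other h1 h2, map_one]
    · rw [heps eps1, hval, fgen_other h1 h2, map_one]
  obtain ⟨a, ha⟩ : ∃ a : ℤ, q (M.simple v) = sr ((2 * a : ℤ)) := by
    refine classify_x ?_ ?_
    · rw [heps eps2, hval, fgen_v, eps2_sr_zero]
    · rw [heps eps1, hval, fgen_v, eps1_sr_zero]
  obtain ⟨b, hb⟩ : ∃ b : ℤ, q (M.simple w) = sr ((2 * b + 1 : ℤ)) := by
    refine classify_y ?_ ?_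
    · rw [heps eps2, hval, fgen_w hvw, eps2_sr_one]
    · rw [heps eps1, hval, fgen_w hvw, eps1_sr_one]
  have hq_surj : Function.Surjective q := by
    intro z
    obtain ⟨x, hx⟩ := piH_surjective M v w hvw hnadj hv hw z
    refine ⟨α.symm x, ?_⟩
    show π (α (α.symm x)) = z
    rw [MulEquiv.apply_symm_apply]
    exact hx
  have hr1 : (r 1 : DD) ∈ Subgroup.closure {(sr ((2 * a : ℤ)) : DD), sr ((2 * b + 1 : ℤ))} := by
    have htop : q.range = ⊤ := MonoidHom.range_eq_top.mpr hq_surj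
    have hle : q.range ≤ Subgroup.closure {(sr ((2 * a : ℤ)) : DD), sr ((2 * b + 1 : ℤ))} := by
      rw [MonoidHom.range_eq_map, ← M.toCoxeterSystem.subgroup_closure_range_simple,
        MonoidHom.map_closure]
      refine (Subgroup.closure_le _).mpr ?_
      rintro z ⟨_, ⟨u, rfl⟩, rfl⟩
      by_cases h1 : u = v
      · subst h1
        rw [show q (M.toCoxeterSystem.simple u) = sr ((2 * a : ℤ)) from ha]
        exact Subgroup.subset_closure (Or.inl rfl)
      by_cases h2 : u = w
      · subst h2
        rw [show q (M.toCoxeterSystem.simple u) = sr ((2 * b + 1 : ℤ)) from hb]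
        exact Subgroup.subset_closure (Or.inr rfl)
      · rw [show q (M.toCoxeterSystem.simple u) = 1 from hother u h1 h2]
        exact Subgroup.one_mem _
    exact hle (htop ▸ Subgroup.mem_top (r 1))
  have hkey : ∃ d : DD, (d * sr 0 * d⁻¹ = sr ((2 * a : ℤ))) ∧ (d * sr 1 * d⁻¹ = sr ((2 * b + 1 : ℤ))) := by
    rcases gen_pq hr1 with hcase | hcase
    · refine ⟨r (-a), ?_, ?_⟩
      · erw [conj_r_sr]
        exact congrArg sr (show (0:ℤ) - 2 * -a = 2 * a by ring)
      · erw [conj_r_sr]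
        exact congrArg sr (show (1 : ℤ) - 2 * (-a) = 2 * b + 1 by omega)
    · refine ⟨sr a, ?_, ?_⟩
      · erw [conj_sr_sr]
        exact congrArg sr (show (2:ℤ) * a - 0 = 2 * a by ring)
      · erw [conj_sr_sr]
        exact congrArg sr (show (2 : ℤ) * a - 1 = 2 * b + 1 by omega)
  obtain ⟨d, hd0, hd1⟩ := hkey
  refine ⟨d, ?_⟩
  have hhom : q = (MulAut.conj d).toMonoidHom.comp π := by
    refine M.toCoxeterSystem.ext_simple (fun u => ?_)
    show q (M.simple u) = (MulAut.conj d) (π (M.simple u))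
    rw [MulAut.conj_apply]
    by_cases h1 : u = v
    · subst h1
      rw [ha, hval, fgen_v, hd0]
    by_cases h2 : u = w
    · subst h2
      rw [hb, hval, fgen_w hvw, hd1]
    · rw [hother u h1 h2, hval, fgen_other h1 h2, mul_one, mul_inv_cancel]
  intro x
  have := DFunLike.congr_fun hhom x
  calc π (α x) = q x := rfl
  _ = (MulAut.conj d).toMonoidHom.comp π x := this
  _ = d * π x * d⁻¹ := by rw [MonoidHom.comp_apply]; rfl


lemma conj_unique {d d' : DD}
    (h : ∀ x : M.Group, d * piH M v w hvw hnadj hv hw x * d⁻¹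
      = d' * piH M v w hvw hnadj hv hw x * d'⁻¹) : d = d' :=
  eq_of_conj_eq (fun z => by
    obtain ⟨x, rfl⟩ := piH_surjective M v w hvw hnadj hv hw z
    exact h x)

/-- The underlying function of the homomorphism `(Psi M).ker → D∞`. -/
noncomputable def phifun : ((Psi M).ker : Subgroup (MulAut M.Group)) → DD := fun α =>
  Classical.choose (exists_conj M v w hvw hnadj hv hw α.1 (ker_fix M α.2))

lemma phifun_spec (α : ((Psi M).ker : Subgroup (MulAut M.Group))) (x : M.Group) :
    piH M v w hvw hnadj hv hw (α.1 x)
      = phifun M v w hvw hnadj hv hw α * piH M v w hvw hnadj hv hw x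
        * (phifun M v w hvw hnadj hv hw α)⁻¹ :=
  Classical.choose_spec (exists_conj M v w hvw hnadj hv hw α.1 (ker_fix M α.2)) x

/-- The homomorphism from the finite-index subgroup of `MulAut W` onto `D∞`. -/
noncomputable def phi : ((Psi M).ker : Subgroup (MulAut M.Group)) →* DD :=
  MonoidHom.mk' (phifun M v w hvw hnadj hv hw) (by
    intro α β
    refine conj_unique M v w hvw hnadj hv hw (fun x => ?_)
    calc phifun M v w hvw hnadj hv hw (α * β) * piH M v w hvw hnadj hv hw x
          * (phifun M v w hvw hnadj hv hw (α * β))⁻¹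
        = piH M v w hvw hnadj hv hw ((α * β).1 x) := (phifun_spec M v w hvw hnadj hv hw (α * β) x).symm
      _ = piH M v w hvw hnadj hv hw (α.1 (β.1 x)) := rfl
      _ = phifun M v w hvw hnadj hv hw α
            * (phifun M v w hvw hnadj hv hw β * piH M v w hvw hnadj hv hw x
              * (phifun M v w hvw hnadj hv hw β)⁻¹)
            * (phifun M v w hvw hnadj hv hw α)⁻¹ := by
          rw [phifun_spec M v w hvw hnadj hv hw α (β.1 x),
            phifun_spec M v w hvw hnadj hv hw β x]
      _ = phifun M v w hvw hnadj hv hw α * phifun M v w hvw hnadj hv hw β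
            * piH M v w hvw hnadj hv hw x
            * (phifun M v w hvw hnadj hv hw α * phifun M v w hvw hnadj hv hw β)⁻¹ := by
          rw [mul_inv_rev]
          group)

lemma phi_surjective : Function.Surjective (phi M v w hvw hnadj hv hw) := by
  intro d
  obtain ⟨x0, hx0⟩ := piH_surjective M v w hvw hnadj hv hw d
  refine ⟨⟨MulAut.conj x0, conj_mem_ker M x0⟩, ?_⟩
  refine conj_unique M v w hvw hnadj hv hw (fun x => ?_)
  calc phi M v w hvw hnadj hv hw ⟨MulAut.conj x0, conj_mem_ker M x0⟩
        * piH M v w hvw hnadj hv hw x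
        * (phi M v w hvw hnadj hv hw ⟨MulAut.conj x0, conj_mem_ker M x0⟩)⁻¹
      = piH M v w hvw hnadj hv hw ((MulAut.conj x0) x) :=
        (phifun_spec M v w hvw hnadj hv hw ⟨MulAut.conj x0, conj_mem_ker M x0⟩ x).symm
    _ = piH M v w hvw hnadj hv hw (x0 * x * x0⁻¹) := by rw [MulAut.conj_apply]
    _ = d * piH M v w hvw hnadj hv hw x * d⁻¹ := by
        rw [map_mul, map_mul, map_inv, hx0]

end CoxPart

theorem master {V : Type*} [DecidableEq V] [Fintype V] (M : CoxeterMatrix V)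
    (v w : V) (hvw : v ≠ w) (hnadj : M v w = 0)
    (hv : M.EvenVertex v) (hw : M.EvenVertex w) :
    VirtuallySurjectsOnto (MulAut M.Group) Z2Z2 :=
  ⟨(Psi M).ker, ker_finiteIndex M,
    sig.comp (phi M v w hvw hnadj hv hw),
    sig_surjective.comp (phi_surjective M v w hvw hnadj hv hw)⟩

end Stmt1Aux

theorem stmt1 {V : Type*} [Fintype V] (M : CoxeterMatrix V)
    (v w : V) (hvw : v ≠ w) (hnadj : M v w = 0)
    (hv : M.EvenVertex v) (hw : M.EvenVertex w) :
    VirtuallySurjectsOnto (MulAut M.Group) Z2Z2 := by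
  classical
  exact Stmt1Aux.master M v w hvw hnadj hv hw
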